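/- The generic symmetry group is invariant under scalar extension: if E is an extension field of the infinite field k and V is a cyclic kG-module, then Sym(G,V) = Sym(G, V ⊗_k E). -/

import Mathlib

open Matrix


section Aux
variable {d : ℕ}

/-- The matrix whose `j`-th column is `N (s j) *ᵥ u`. -/
noncomputable def auxColX {G T : Type*} [CommRing T]
    (N : G → Matrix (Fin d) (Fin d) T) (u : Fin d → T) (s : Fin d → G) :
    Matrix (Fin d) (Fin d) T :=
  Matrix.of fun i j => (N (s j) *ᵥ u) i

lemma auxColX_map {G T T' : Type*} [CommRing T] [CommRing T'] (f : T →+* T')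
    (N : G → Matrix (Fin d) (Fin d) T) (u : Fin d → T) (s : Fin d → G) :
    (auxColX N u s).map f = auxColX (fun g => (N g).map f) (f ∘ u) s := by
  ext i j
  show f ((N (s j) *ᵥ u) i) = ((N (s j)).map f *ᵥ (f ∘ u)) i
  exact f.map_mulVec _ _ i

lemma aux_span_columns {F : Type*} [Field F] (X : Matrix (Fin d) (Fin d) F) (h : IsUnit X) :
    Submodule.span F (Set.range Xᵀ) = ⊤ := by
  change Submodule.span F (Set.range X.col) = ⊤
  rw [← Matrix.range_mulVecLin, LinearMap.range_eq_top]
  intro b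
  refine ⟨X⁻¹ *ᵥ b, ?_⟩
  rw [Matrix.mulVecLin_apply, Matrix.mulVec_mulVec,
    Matrix.mul_nonsing_inv _ ((Matrix.isUnit_iff_isUnit_det X).mp h), Matrix.one_mulVec]

lemma aux_exists_cols {F : Type*} [Field F] {ι : Type*} [Fintype ι]
    (f : ι → (Fin d → F)) (hspan : Submodule.span F (Set.range f) = ⊤) :
    ∃ t : Fin d → ι, IsUnit (Matrix.of fun i j => f (t j) i) := by
  classical
  obtain ⟨b, hb_sub, hb_span, hb_li⟩ := exists_linearIndependent F (Set.range f)
  rw [hspan] at hb_span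
  haveI : Fintype b := ((Set.finite_range f).subset hb_sub).fintype
  let B : Module.Basis b F (Fin d → F) := Module.Basis.mk hb_li (by rw [Subtype.range_coe, hb_span])
  have hcard : Fintype.card b = d := by
    rw [← Module.finrank_eq_card_basis B, Module.finrank_fin_fun]
  let e : Fin d ≃ b := Fintype.equivOfCardEq (by rw [Fintype.card_fin, hcard])
  have hmem : ∀ j : Fin d, (e j : Fin d → F) ∈ Set.range f := fun j => hb_sub (e j).2
  choose t ht using hmem
  refine ⟨t, ?_⟩
  have hli : LinearIndependent F fun j : Fin d => (e j : Fin d → F) := by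
    have h1 := B.linearIndependent.comp e e.injective
    simpa [B, Function.comp_def] using h1
  refine Matrix.mulVec_injective_iff_isUnit.mp (Matrix.mulVec_injective_iff.mpr ?_)
  have : (fun j : Fin d => (Matrix.of fun i j => f (t j) i)ᵀ j) =
      fun j : Fin d => (e j : Fin d → F) := by
    funext j; funext i
    simp [Matrix.transpose_apply, ht j]
  change LinearIndependent F (fun j : Fin d => (Matrix.of fun i j => f (t j) i)ᵀ j)
  rw [this]
  exact hli

end Aux

section Aux2
variable {d : ℕ} {F : Type*} [Field F] {G : Type*} [Fintype G]

lemma aux_exists_GL [DecidableEq G]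
    (N : G → Matrix (Fin d) (Fin d) F) (π : Equiv.Perm G) (v : Fin d → F)
    (hspan : Submodule.span F (Set.range fun g : G => N g *ᵥ v) = ⊤)
    (hker : ∀ c : G → F, ∑ g : G, c g • (N g *ᵥ v) = 0 →
      ∑ g : G, c g • (N (π g) *ᵥ v) = 0) :
    ∃ A : GL (Fin d) F, ∀ g : G, A.val *ᵥ (N g *ᵥ v) = N (π g) *ᵥ v := by
  classical
  set p : (G → F) →ₗ[F] (Fin d → F) :=
    Fintype.linearCombination F (fun g : G => N g *ᵥ v) with hp
  set q : (G → F) →ₗ[F] (Fin d → F) :=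
    Fintype.linearCombination F (fun g : G => N (π g) *ᵥ v) with hq
  have hpr : LinearMap.range p = ⊤ := by
    rw [hp, Fintype.range_linearCombination, hspan]
  have hqr : LinearMap.range q = ⊤ := by
    rw [hq, Fintype.range_linearCombination]
    have h1 : (fun g : G => N (π g) *ᵥ v) = (fun g : G => N g *ᵥ v) ∘ π := rfl
    rw [h1, π.surjective.range_comp, hspan]
  obtain ⟨sec, hsec⟩ := p.exists_rightInverse_of_surjective hpr
  set f : (Fin d → F) →ₗ[F] (Fin d → F) := q ∘ₗ sec with hf
  have hfp : ∀ x, f (p x) = q x := by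
    intro x
    have h0 : p (sec (p x) - x) = 0 := by
      rw [map_sub]
      have h1 : p (sec (p x)) = p x := by
        rw [← LinearMap.comp_apply, hsec, LinearMap.id_apply]
      rw [h1, sub_self]
    have h2 : q (sec (p x) - x) = 0 := by
      have := hker (sec (p x) - x)
        (by simpa [hp, Fintype.linearCombination_apply] using h0)
      simpa [hq, Fintype.linearCombination_apply] using this
    have h3 : q (sec (p x)) - q x = 0 := by rw [← map_sub, h2]
    have := sub_eq_zero.mp h3
    simpa [hf] using this
  have hfsurj : Function.Surjective f := by
    intro y
    have hy : y ∈ LinearMap.range q := by rw [hqr]; trivial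
    obtain ⟨c, hc⟩ := hy
    exact ⟨p c, by rw [hfp c, hc]⟩
  have hfinj : Function.Injective f := LinearMap.injective_iff_surjective.mpr hfsurj
  let feq := LinearEquiv.ofBijective f ⟨hfinj, hfsurj⟩
  have hmul1 : LinearMap.toMatrix' (feq : (Fin d → F) →ₗ[F] (Fin d → F)) *
      LinearMap.toMatrix' (feq.symm : (Fin d → F) →ₗ[F] (Fin d → F)) = 1 := by
    rw [← LinearMap.toMatrix'_comp, ← LinearMap.toMatrix'_id (R := F) (n := Fin d)]
    congr 1
    exact LinearMap.ext fun x => feq.apply_symm_apply x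
  have hmul2 : LinearMap.toMatrix' (feq.symm : (Fin d → F) →ₗ[F] (Fin d → F)) *
      LinearMap.toMatrix' (feq : (Fin d → F) →ₗ[F] (Fin d → F)) = 1 := by
    rw [← LinearMap.toMatrix'_comp, ← LinearMap.toMatrix'_id (R := F) (n := Fin d)]
    congr 1
    exact LinearMap.ext fun x => feq.symm_apply_apply x
  refine ⟨⟨LinearMap.toMatrix' (feq : (Fin d → F) →ₗ[F] (Fin d → F)),
      LinearMap.toMatrix' (feq.symm : (Fin d → F) →ₗ[F] (Fin d → F)), hmul1, hmul2⟩, ?_⟩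
  intro g
  have h2 : (LinearMap.toMatrix' (feq : (Fin d → F) →ₗ[F] (Fin d → F))) *ᵥ (N g *ᵥ v)
      = f (N g *ᵥ v) := by
    rw [← Matrix.toLin'_apply, Matrix.toLin'_toMatrix']
    rfl
  show (LinearMap.toMatrix' (feq : (Fin d → F) →ₗ[F] (Fin d → F))) *ᵥ (N g *ᵥ v)
      = N (π g) *ᵥ v
  have h3 : (N g *ᵥ v) = p (Pi.single g 1) := by
    simp [hp]
  rw [h2, h3, hfp]
  simp [hq]

lemma aux_ker_of_GL
    (N : G → Matrix (Fin d) (Fin d) F) (π : Equiv.Perm G) (v : Fin d → F)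
    (A : GL (Fin d) F) (hA : ∀ g : G, A.val *ᵥ (N g *ᵥ v) = N (π g) *ᵥ v)
    (c : G → F) (hc : ∑ g : G, c g • (N g *ᵥ v) = 0) :
    ∑ g : G, c g • (N (π g) *ᵥ v) = 0 := by
  calc ∑ g : G, c g • (N (π g) *ᵥ v)
      = ∑ g : G, c g • (A.val.mulVecLin (N g *ᵥ v)) := by
        simp_rw [Matrix.mulVecLin_apply, hA]
    _ = A.val.mulVecLin (∑ g : G, c g • (N g *ᵥ v)) := by
        rw [map_sum]
        exact Finset.sum_congr rfl fun g _ => (_root_.map_smul _ _ _).symm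
    _ = 0 := by rw [hc, map_zero]

end Aux2

section Aux3
variable {d : ℕ} {k : Type*} [Field k] {G : Type*}

/-- The representing matrices with polynomial entries. -/
noncomputable def auxNR (M : G → Matrix (Fin d) (Fin d) k) (g : G) :
    Matrix (Fin d) (Fin d) (MvPolynomial (Fin d) k) :=
  (M g).map MvPolynomial.C

/-- Column matrix of `N (s j) *ᵥ u` for a ring hom image of `M`. -/
noncomputable def auxColXT (T : Type*) [CommRing T] [Algebra k T]
    (M : G → Matrix (Fin d) (Fin d) k) (u : Fin d → T) (s : Fin d → G) :
    Matrix (Fin d) (Fin d) T :=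
  Matrix.of fun i j => ((M (s j)).map (algebraMap k T) *ᵥ u) i

/-- The key polynomial: `(Y_s · adj(X_s) · (M g · x))_i − det(X_s) · (M (π g) · x)_i`. -/
noncomputable def auxP (M : G → Matrix (Fin d) (Fin d) k) (π : Equiv.Perm G)
    (s : Fin d → G) (g : G) (i : Fin d) : MvPolynomial (Fin d) k :=
  (auxColXT (MvPolynomial (Fin d) k) M MvPolynomial.X (π ∘ s) *ᵥ
      ((auxColXT (MvPolynomial (Fin d) k) M MvPolynomial.X s).adjugate *ᵥ
        (auxNR M g *ᵥ MvPolynomial.X))) i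
    - (auxColXT (MvPolynomial (Fin d) k) M MvPolynomial.X s).det *
        ((auxNR M (π g) *ᵥ MvPolynomial.X) i)

lemma auxNR_eq (M : G → Matrix (Fin d) (Fin d) k) (g : G) :
    auxNR M g = (M g).map (algebraMap k (MvPolynomial (Fin d) k)) := by
  ext i j
  simp [auxNR, Matrix.map_apply, MvPolynomial.algebraMap_eq]

lemma auxP_eval {T : Type*} [CommRing T] [Algebra k T] (u : Fin d → T)
    (M : G → Matrix (Fin d) (Fin d) k) (π : Equiv.Perm G)
    (s : Fin d → G) (g : G) (i : Fin d) :
    MvPolynomial.aeval u (auxP M π s g i) =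
      (auxColXT T M u (π ∘ s) *ᵥ
          ((auxColXT T M u s).adjugate *ᵥ ((M g).map (algebraMap k T) *ᵥ u))) i
        - (auxColXT T M u s).det * (((M (π g)).map (algebraMap k T) *ᵥ u) i) := by
  classical
  set φ : MvPolynomial (Fin d) k →+* T := (MvPolynomial.aeval u).toRingHom with hφ
  have hφC : ∀ a : k, φ (MvPolynomial.C a) = algebraMap k T a := by
    intro a; simp [hφ]
  have hN : ∀ h : G, (auxNR M h).map φ = (M h).map (algebraMap k T) := by
    intro h; ext i' j'
    simp [auxNR, Matrix.map_apply, hφC]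
  have hu : (φ ∘ (MvPolynomial.X : Fin d → MvPolynomial (Fin d) k)) = u := by
    funext i'; simp [hφ]
  have hvec : ∀ h : G, (φ ∘ fun i' => (auxNR M h *ᵥ MvPolynomial.X) i')
      = (M h).map (algebraMap k T) *ᵥ u := by
    intro h; funext i'
    show φ ((auxNR M h *ᵥ MvPolynomial.X) i') = _
    rw [φ.map_mulVec, hN, hu]
  have hXs : ∀ s' : Fin d → G,
      (auxColXT (MvPolynomial (Fin d) k) M MvPolynomial.X s').map φ = auxColXT T M u s' := by
    intro s'
    ext i' j'
    show φ (((M (s' j')).map (algebraMap k (MvPolynomial (Fin d) k)) *ᵥ MvPolynomial.X) i') = _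
    rw [φ.map_mulVec, hu]
    have : ((M (s' j')).map (algebraMap k (MvPolynomial (Fin d) k))).map φ
        = (M (s' j')).map (algebraMap k T) := by
      rw [← auxNR_eq]; exact hN _
    rw [this]
    rfl
  have hdet : φ ((auxColXT (MvPolynomial (Fin d) k) M MvPolynomial.X s).det)
      = (auxColXT T M u s).det := by
    rw [φ.map_det]
    rw [RingHom.mapMatrix_apply, hXs]
  have hadj : ((auxColXT (MvPolynomial (Fin d) k) M MvPolynomial.X s).adjugate).map φ
      = (auxColXT T M u s).adjugate := by
    have := φ.map_adjugate (auxColXT (MvPolynomial (Fin d) k) M MvPolynomial.X s)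
    rw [RingHom.mapMatrix_apply, RingHom.mapMatrix_apply, hXs] at this
    exact this
  show φ (auxP M π s g i) = _
  rw [auxP, map_sub, _root_.map_mul, hdet]
  congr 1
  · rw [φ.map_mulVec, hXs]
    congr 1
    funext i'
    show φ (((auxColXT (MvPolynomial (Fin d) k) M MvPolynomial.X s).adjugate *ᵥ
        (auxNR M g *ᵥ MvPolynomial.X)) i') = _
    rw [φ.map_mulVec, hadj, hvec]
  · exact congrArg (fun x => (auxColXT T M u s).det * x) (congrFun (hvec (π g)) i)

end Aux3
section Aux4
variable {d : ℕ} {k : Type*} [Field k] {G : Type*}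

lemma aux_map_self (M' : Matrix (Fin d) (Fin d) k) : M'.map (algebraMap k k) = M' := by
  ext i j; simp [Matrix.map_apply]

lemma aux_aeval_eq_eval (v : Fin d → k) (p : MvPolynomial (Fin d) k) :
    MvPolynomial.aeval v p = MvPolynomial.eval v p := by
  rw [MvPolynomial.aeval_eq_eval₂Hom, Algebra.algebraMap_self]
  rfl

lemma auxColXT_map_aeval {T : Type*} [CommRing T] [Algebra k T] (u : Fin d → T)
    (M : G → Matrix (Fin d) (Fin d) k) (s' : Fin d → G) :
    (auxColXT (MvPolynomial (Fin d) k) M MvPolynomial.X s').map (MvPolynomial.aeval u)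
      = auxColXT T M u s' := by
  ext i' j'
  show (MvPolynomial.aeval u).toRingHom
      (((M (s' j')).map (algebraMap k (MvPolynomial (Fin d) k)) *ᵥ MvPolynomial.X) i') = _
  rw [RingHom.map_mulVec]
  have h1 : ((M (s' j')).map (algebraMap k (MvPolynomial (Fin d) k))).map
      (MvPolynomial.aeval u).toRingHom = (M (s' j')).map (algebraMap k T) := by
    ext a b; simp [Matrix.map_apply]
  have h2 : (⇑(MvPolynomial.aeval u).toRingHom ∘ (MvPolynomial.X : Fin d → MvPolynomial (Fin d) k))
      = u := by
    funext a; simp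
  rw [h1, h2]
  rfl

lemma auxdet_eval {T : Type*} [CommRing T] [Algebra k T] (u : Fin d → T)
    (M : G → Matrix (Fin d) (Fin d) k) (s' : Fin d → G) :
    MvPolynomial.aeval u ((auxColXT (MvPolynomial (Fin d) k) M MvPolynomial.X s').det)
      = (auxColXT T M u s').det := by
  have h := ((MvPolynomial.aeval u : MvPolynomial (Fin d) k →ₐ[k] T).toRingHom).map_det
    (auxColXT (MvPolynomial (Fin d) k) M MvPolynomial.X s')
  rw [RingHom.mapMatrix_apply] at h
  have h2 : (auxColXT (MvPolynomial (Fin d) k) M MvPolynomial.X s').map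
      (MvPolynomial.aeval u).toRingHom = auxColXT T M u s' := auxColXT_map_aeval u M s'
  rw [h2] at h
  exact h

lemma auxP_zero [Infinite k] [Fintype G] (M : G → Matrix (Fin d) (Fin d) k)
    (π : Equiv.Perm G)
    (hL : ∀ v : Fin d → k, Submodule.span k (Set.range fun g : G => M g *ᵥ v) = ⊤ →
      ∃ A : GL (Fin d) k, ∀ g : G, A.val *ᵥ (M g *ᵥ v) = M (π g) *ᵥ v)
    (s : Fin d → G)
    (hdet : (auxColXT (MvPolynomial (Fin d) k) M MvPolynomial.X s).det ≠ 0)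
    (g : G) (i : Fin d) : auxP M π s g i = 0 := by
  classical
  have hzero : auxP M π s g i *
      (auxColXT (MvPolynomial (Fin d) k) M MvPolynomial.X s).det = 0 := by
    apply MvPolynomial.funext
    intro v
    rw [map_zero, _root_.map_mul]
    rw [← aux_aeval_eq_eval, ← aux_aeval_eq_eval, auxdet_eval]
    by_cases hd : (auxColXT k M v s).det = 0
    · rw [hd, mul_zero]
    · have hunit : IsUnit (auxColXT k M v s) :=
        (Matrix.isUnit_iff_isUnit_det _).mpr (isUnit_iff_ne_zero.mpr hd)
      have hgen : Submodule.span k (Set.range fun g : G => M g *ᵥ v) = ⊤ := by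
        apply top_unique
        rw [← aux_span_columns _ hunit]
        apply Submodule.span_mono
        rintro x ⟨j, rfl⟩
        refine ⟨s j, ?_⟩
        funext i'
        simp [auxColXT, Matrix.transpose_apply, aux_map_self, RingHom.id_apply, Matrix.map_apply, Matrix.mulVec, dotProduct]
      obtain ⟨A, hA⟩ := hL v hgen
      have heval := auxP_eval (T := k) v M π s g i
      simp only [aux_map_self] at heval
      have hY : auxColXT k M v (π ∘ s) = A.val * auxColXT k M v s := by
        ext i' j'
        have hl : auxColXT k M v (π ∘ s) i' j' = (M (π (s j')) *ᵥ v) i' := by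
          simp [auxColXT, aux_map_self, RingHom.id_apply, Matrix.map_apply, Matrix.mulVec, dotProduct]
        rw [hl, ← hA (s j')]
        simp [Matrix.mul_apply, Matrix.mulVec, dotProduct, auxColXT, aux_map_self,
          Matrix.map_apply]
      have hcomp : auxColXT k M v (π ∘ s) *ᵥ ((auxColXT k M v s).adjugate *ᵥ (M g *ᵥ v))
          = (auxColXT k M v s).det • (M (π g) *ᵥ v) := by
        rw [Matrix.mulVec_mulVec, hY, Matrix.mul_assoc, Matrix.mul_adjugate,
          Matrix.mul_smul, Matrix.mul_one, Matrix.smul_mulVec, hA]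
      rw [heval, hcomp]
      simp only [Pi.smul_apply, smul_eq_mul]
      rw [sub_self, zero_mul]
  rcases mul_eq_zero.mp hzero with h | h
  · exact h
  · exact absurd h hdet

end Aux4
/-- The generic symmetry group is invariant under scalar extension:
for an extension field `E/k` and a cyclic module `k^d`,
`Sym(G,V) = Sym(G, V ⊗_k E)`. -/
theorem generic_sym_scalar_extension
    {k G : Type*} [Field k] [Infinite k] [Group G] [Finite G]
    (E : Type*) [Field E] [Algebra k E] (d : ℕ)
    (ρ : G →* GL (Fin d) k)
    (hcyc : ∃ v : Fin d → k,
      Submodule.span k (Set.range fun g : G => (ρ g).val.mulVec v) = ⊤)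
    (π : Equiv.Perm G) :
    (∀ v : Fin d → k,
        Submodule.span k (Set.range fun g : G => (ρ g).val.mulVec v) = ⊤ →
        ∃ A : GL (Fin d) k,
          ∀ g : G, A.val.mulVec ((ρ g).val.mulVec v) = (ρ (π g)).val.mulVec v) ↔
    (∀ w : Fin d → E,
        Submodule.span E
          (Set.range fun g : G => ((ρ g).val.map (algebraMap k E)).mulVec w) = ⊤ →
        ∃ B : GL (Fin d) E,
          ∀ g : G, B.val.mulVec (((ρ g).val.map (algebraMap k E)).mulVec w) =
            ((ρ (π g)).val.map (algebraMap k E)).mulVec w) := by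
  haveI := Fintype.ofFinite G
  classical
  set M : G → Matrix (Fin d) (Fin d) k := fun g => (ρ g).val with hM
  constructor
  · -- forward direction
    intro hL w hw
    obtain ⟨t, hUnit⟩ := aux_exists_cols (fun g : G => (M g).map (algebraMap k E) *ᵥ w) hw
    have hUnit' : IsUnit (auxColXT E M w t) := hUnit
    have hdE : (auxColXT E M w t).det ≠ 0 :=
      isUnit_iff_ne_zero.mp ((Matrix.isUnit_iff_isUnit_det _).mp hUnit')
    have hdP : (auxColXT (MvPolynomial (Fin d) k) M MvPolynomial.X t).det ≠ 0 := by
      intro h0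
      apply hdE
      rw [← auxdet_eval w M t, h0, map_zero]
    have hP0 : ∀ (g : G) (i : Fin d), auxP M π t g i = 0 :=
      fun g i => auxP_zero M π hL t hdP g i
    have hId : ∀ (g : G) (i : Fin d),
        (auxColXT E M w (π ∘ t) *ᵥ ((auxColXT E M w t).adjugate *ᵥ
          ((M g).map (algebraMap k E) *ᵥ w))) i
        = (auxColXT E M w t).det * (((M (π g)).map (algebraMap k E) *ᵥ w) i) := by
      intro g i
      have h := auxP_eval (T := E) w M π t g i
      rw [hP0 g i, map_zero] at h
      exact sub_eq_zero.mp h.symm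
    refine aux_exists_GL (fun g : G => (M g).map (algebraMap k E)) π w hw ?_
    intro c hc
    have h1 : (auxColXT E M w t).det •
        ∑ g : G, c g • ((M (π g)).map (algebraMap k E) *ᵥ w) = 0 := by
      rw [Finset.smul_sum]
      have hterm : ∀ g : G,
          (auxColXT E M w t).det • (c g • ((M (π g)).map (algebraMap k E) *ᵥ w))
          = c g • (auxColXT E M w (π ∘ t) *ᵥ ((auxColXT E M w t).adjugate *ᵥ
              ((M g).map (algebraMap k E) *ᵥ w))) := by
        intro g
        rw [smul_comm]
        congr 1
        funext i
        rw [Pi.smul_apply, smul_eq_mul]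
        exact (hId g i).symm
      rw [Finset.sum_congr rfl (fun g _ => hterm g)]
      have hlin : ∀ z : Fin d → E,
          auxColXT E M w (π ∘ t) *ᵥ ((auxColXT E M w t).adjugate *ᵥ z)
          = ((auxColXT E M w (π ∘ t)).mulVecLin ∘ₗ
              (auxColXT E M w t).adjugate.mulVecLin) z := fun z => rfl
      calc ∑ g : G, c g • (auxColXT E M w (π ∘ t) *ᵥ ((auxColXT E M w t).adjugate *ᵥ
              ((M g).map (algebraMap k E) *ᵥ w)))
          = ((auxColXT E M w (π ∘ t)).mulVecLin ∘ₗ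
              (auxColXT E M w t).adjugate.mulVecLin)
              (∑ g : G, c g • ((M g).map (algebraMap k E) *ᵥ w)) := by
            rw [map_sum]
            refine Finset.sum_congr rfl fun g _ => ?_
            rw [_root_.map_smul, hlin]
        _ = 0 := by rw [hc, map_zero]
    rcases smul_eq_zero.mp h1 with h | h
    · exact absurd h hdE
    · exact h
  · -- reverse direction
    intro hR v hv
    set w : Fin d → E := fun i => algebraMap k E (v i) with hwdef
    obtain ⟨t, hUnitk⟩ := aux_exists_cols (fun g : G => M g *ᵥ v) hv
    have hd0 : (Matrix.of fun i j => (M (t j) *ᵥ v) i).det ≠ 0 :=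
      isUnit_iff_ne_zero.mp ((Matrix.isUnit_iff_isUnit_det _).mp hUnitk)
    have hkey : auxColXT E M w t
        = (Matrix.of fun i j => (M (t j) *ᵥ v) i).map (algebraMap k E) := by
      ext i j
      show ((M (t j)).map (algebraMap k E) *ᵥ w) i = algebraMap k E ((M (t j) *ᵥ v) i)
      exact ((algebraMap k E).map_mulVec (M (t j)) v i).symm
    have hdetE : (auxColXT E M w t).det ≠ 0 := by
      have h1 : (auxColXT E M w t).det
          = algebraMap k E ((Matrix.of fun i j => (M (t j) *ᵥ v) i).det) := by
        rw [hkey, ← RingHom.mapMatrix_apply]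
        exact ((algebraMap k E).map_det _).symm
      rw [h1]
      intro h0
      exact hd0 ((algebraMap k E).injective (by rw [h0, map_zero]))
    have hUnitE : IsUnit (auxColXT E M w t) :=
      (Matrix.isUnit_iff_isUnit_det _).mpr (isUnit_iff_ne_zero.mpr hdetE)
    have hwgen : Submodule.span E
        (Set.range fun g : G => (M g).map (algebraMap k E) *ᵥ w) = ⊤ := by
      apply top_unique
      rw [← aux_span_columns _ hUnitE]
      apply Submodule.span_mono
      rintro x ⟨j, rfl⟩
      exact ⟨t j, rfl⟩
    obtain ⟨B, hB⟩ := hR w hwgen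
    refine aux_exists_GL M π v hv ?_
    intro c hc
    have hcE : ∑ g : G, (algebraMap k E (c g)) • ((M g).map (algebraMap k E) *ᵥ w) = 0 := by
      funext i
      have hzi : (0 : Fin d → E) i = 0 := rfl
      rw [Finset.sum_apply]
      have hterm : ∀ g : G,
          (algebraMap k E (c g) • ((M g).map (algebraMap k E) *ᵥ w)) i
          = algebraMap k E (c g * (M g *ᵥ v) i) := by
        intro g
        rw [Pi.smul_apply, smul_eq_mul, _root_.map_mul]
        congr 1
        exact ((algebraMap k E).map_mulVec (M g) v i).symm
      rw [Finset.sum_congr rfl (fun g _ => hterm g), ← map_sum]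
      have h3 : ∑ g : G, c g * (M g *ᵥ v) i = 0 := by
        have := congrFun hc i
        simpa [Finset.sum_apply, Pi.smul_apply, smul_eq_mul] using this
      rw [h3, map_zero]
      rfl
    have hres := aux_ker_of_GL (fun g : G => (M g).map (algebraMap k E)) π w B hB
      (fun g => algebraMap k E (c g)) hcE
    funext i
    apply (algebraMap k E).injective
    have hterm : ∀ g : G,
        algebraMap k E ((c g • (M (π g) *ᵥ v)) i)
        = (algebraMap k E (c g) • ((M (π g)).map (algebraMap k E) *ᵥ w)) i := by
      intro g
      rw [Pi.smul_apply, smul_eq_mul, _root_.map_mul, Pi.smul_apply, smul_eq_mul]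
      congr 1
      exact (algebraMap k E).map_mulVec (M (π g)) v i
    calc algebraMap k E ((∑ g : G, c g • (M (π g) *ᵥ v)) i)
        = ∑ g : G, algebraMap k E ((c g • (M (π g) *ᵥ v)) i) := by
          rw [Finset.sum_apply, map_sum]
      _ = ∑ g : G, (algebraMap k E (c g) • ((M (π g)).map (algebraMap k E) *ᵥ w)) i := by
          exact Finset.sum_congr rfl fun g _ => hterm g
      _ = 0 := by rw [← Finset.sum_apply]; rw [hres]; rfl
      _ = algebraMap k E ((0 : Fin d → k) i) := by simp
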